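/- Let R be a commutative ring and A : Matrix (Fin n) (Fin n) R a symmetric matrix (Aᵀ = A). Then det A − ∏_{i} A i i lies in the ideal of R generated by the element 2 together with all squares (A i j)² of off-diagonal entries (i ≠ j). In other words, except for the main-diagonal term, every term of the Leibniz expansion of det A either carries a factor 2 or contains the square of an off-diagonal entry. -/

import Mathlib

theorem det_eq_diag_aux {S : Type*} [CommRing S] {n : ℕ} (h2 : (2 : S) = 0)
    (B : Matrix (Fin n) (Fin n) S) (hB : B.IsSymm)
    (hsq : ∀ i j : Fin n, i ≠ j → (B i j) ^ 2 = 0) :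
    B.det = ∏ i, B i i := by
  have hsymm : ∀ i j, B i j = B j i := fun i j => by
    conv_lhs => rw [← hB]
    rfl
  have hneg : ∀ x : S, -x = x := fun x => by
    rw [neg_eq_iff_add_eq_zero, ← two_mul, h2, zero_mul]
  rw [Matrix.det_apply]
  have hsign : ∀ σ : Equiv.Perm (Fin n),
      Equiv.Perm.sign σ • ∏ i, B (σ i) i = ∏ i, B (σ i) i := by
    intro σ
    rcases Int.units_eq_one_or (Equiv.Perm.sign σ) with h | h <;> rw [h]
    · rw [one_smul]
    · rw [Units.neg_smul, one_smul, hneg]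
  simp only [hsign]
  have hf : ∀ σ : Equiv.Perm (Fin n), (∏ i, B (σ⁻¹ i) i) = ∏ i, B (σ i) i := by
    intro σ
    calc (∏ i, B (σ⁻¹ i) i) = ∏ i, B i (σ⁻¹ i) := by
          exact Finset.prod_congr rfl fun i _ => hsymm _ _
      _ = ∏ i, B (σ i) (σ⁻¹ (σ i)) := (Equiv.prod_comp σ (fun i => B i (σ⁻¹ i))).symm
      _ = ∏ i, B (σ i) i := by simp
  rw [← Finset.add_sum_erase _ _ (Finset.mem_univ (1 : Equiv.Perm (Fin n)))]
  have hzero : (∑ σ ∈ Finset.univ.erase (1 : Equiv.Perm (Fin n)), ∏ i, B (σ i) i) = 0 := by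
    apply Finset.sum_involution (fun σ _ => σ⁻¹)
    · intro σ _
      rw [hf, ← two_mul, h2, zero_mul]
    · intro σ hσ hne h
      apply hne
      -- σ = σ⁻¹ and σ ≠ 1 : product contains a square, contradiction
      rw [Finset.mem_erase] at hσ
      obtain ⟨i, hi⟩ : ∃ i, σ i ≠ i := by
        by_contra hc
        push_neg at hc
        exact hσ.1 (Equiv.ext hc)
      have hσσ : σ (σ i) = i := by
        nth_rewrite 1 [← h]
        exact Equiv.symm_apply_apply σ i
      have : (∏ k, B (σ k) k) = 0 := by
        rw [← Finset.mul_prod_erase _ _ (Finset.mem_univ i),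
          ← Finset.mul_prod_erase _ _
            (Finset.mem_erase.mpr ⟨hi, Finset.mem_univ (σ i)⟩), hσσ,
          hsymm i (σ i), ← mul_assoc, ← sq, hsq (σ i) i hi, zero_mul]
      simp [this]
    · intro σ _
      simp
    · intro σ hσ
      simp only [Finset.mem_erase, Finset.mem_univ, and_true] at hσ ⊢
      simpa using hσ
  rw [hzero, add_zero]
  exact Finset.prod_congr rfl fun i _ => by simp

/-- **Lemma 1.** For a symmetric matrix `A` over a commutative ring, the difference between
`det A` and its main-diagonal product lies in the ideal generated by `2` together with the
squares of all off-diagonal entries: except for the main-diagonal term, every Leibniz term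
of `det A` carries a factor `2` or contains the square of an off-diagonal entry. -/
theorem det_sub_diag_prod_mem_span {R : Type*} [CommRing R] {n : ℕ}
    (A : Matrix (Fin n) (Fin n) R) (hA : A.IsSymm) :
    A.det - ∏ i, A i i ∈
      Ideal.span ({(2 : R)} ∪ {x : R | ∃ i j : Fin n, i ≠ j ∧ x = (A i j) ^ 2}) := by
  set I := Ideal.span ({(2 : R)} ∪ {x : R | ∃ i j : Fin n, i ≠ j ∧ x = (A i j) ^ 2}) with hI
  rw [← Ideal.Quotient.eq_zero_iff_mem]
  set f := Ideal.Quotient.mk I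
  have h2 : (2 : R ⧸ I) = 0 := by
    have : f 2 = 0 := Ideal.Quotient.eq_zero_iff_mem.mpr
      (Ideal.subset_span (Set.mem_union_left _ rfl))
    rwa [map_ofNat] at this
  have key := det_eq_diag_aux h2 (A.map f) ?_ ?_
  · rw [map_sub, RingHom.map_det, RingHom.mapMatrix_apply, key, map_prod]
    simp [Matrix.map_apply, sub_self]
  · ext i j
    simp [Matrix.map_apply, Matrix.transpose_apply, hA.apply]
  · intro i j hij
    simp only [Matrix.map_apply]
    rw [← map_pow, Ideal.Quotient.eq_zero_iff_mem]
    exact Ideal.subset_span (Set.mem_union_right _ ⟨i, j, hij, rfl⟩)
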